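/- Let X ⊆ P^r be a zero-dimensional closed subscheme that is the disjoint union of two closed subschemes Z and {q}, where q is a reduced point not contained in the linear span considerations of Z. If Z ⊆ P^r is m-regular (m ≥ 1), then X is (m+1)-regular. -/

import Mathlib

open MvPolynomial


/-- The maximal ideal of polynomials vanishing at the point `a` of affine `N`-space. -/
noncomputable def pointIdeal (N : ℕ) (a : Fin N → ℂ) : Ideal (MvPolynomial (Fin N) ℂ) :=
  Ideal.span (Set.range fun j => MvPolynomial.X j - MvPolynomial.C (a j))


/-- Every polynomial is congruent to its value at `a` modulo `pointIdeal N a`. -/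
lemma sub_C_eval_mem_pointIdeal' (N : ℕ) (a : Fin N → ℂ) (p : MvPolynomial (Fin N) ℂ) :
    p - MvPolynomial.C (MvPolynomial.eval a p) ∈
      Ideal.span (Set.range fun j => MvPolynomial.X j - MvPolynomial.C (a j)) := by
  set I := Ideal.span (Set.range fun j => MvPolynomial.X j - MvPolynomial.C (a j)) with hI
  induction p using MvPolynomial.induction_on with
  | C c => simp
  | add p r hp hr =>
      have : p + r - C (eval a (p + r)) =
          (p - C (eval a p)) + (r - C (eval a r)) := by push_cast [map_add]; ring
      rw [this]; exact I.add_mem hp hr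
  | mul_X p j hp =>
      have key : p * X j - C (eval a (p * X j)) =
          p * (X j - C (a j)) + C (a j) * (p - C (eval a p)) := by
        simp only [map_mul, eval_X, map_mul (C : ℂ →+* _)]
        ring
      rw [key]
      exact I.add_mem (I.mul_mem_left _ (Ideal.subset_span ⟨j, rfl⟩))
        (I.mul_mem_left _ hp)

/-- Let `X ⊆ P^r` be a zero-dimensional closed subscheme which is the
disjoint union of a closed subscheme `Z` and a reduced point `q` (placed in a standard affine
chart; `Z` is cut out by the ideal `IZ` with Artinian quotient, and `q ∉ Supp Z`, i.e.
`IZ ⊄ m_q`).  If `Z` is `m`-regular (`m ≥ 1`), which for the finite scheme `Z` means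
`(m-1)`-normality (every function on `Z` is the restriction of a polynomial of degree
`≤ m - 1`), then `X = Z ⊔ {q}` is `(m+1)`-regular, i.e. `m`-normal: every function on `X`
(a function on `Z` together with a value `c` at `q`) is the restriction of a polynomial of
degree `≤ m`. -/
theorem stmt13 (N m : ℕ) (hm : 1 ≤ m)
    (IZ : Ideal (MvPolynomial (Fin N) ℂ)) (hZne : IZ ≠ ⊤)
    (hart : IsArtinianRing (MvPolynomial (Fin N) ℂ ⧸ IZ))
    (q : Fin N → ℂ) (hq : ¬ IZ ≤ pointIdeal N q)
    (hreg : ∀ g : MvPolynomial (Fin N) ℂ,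
      ∃ f, f.totalDegree + 1 ≤ m ∧ f - g ∈ IZ) :
    ∀ (g : MvPolynomial (Fin N) ℂ) (c : ℂ),
      ∃ f, f.totalDegree ≤ m ∧ f - g ∈ IZ ∧ MvPolynomial.eval q f = c := by
  classical
  haveI := hart
  haveI : Nontrivial (MvPolynomial (Fin N) ℂ ⧸ IZ) :=
    Ideal.Quotient.nontrivial_iff.mpr hZne
  -- vanishingIdeal {q} ≤ pointIdeal N q
  have hvq : ∀ p : MvPolynomial (Fin N) ℂ, MvPolynomial.eval q p = 0 → p ∈ pointIdeal N q := by
    intro p hp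
    have := sub_C_eval_mem_pointIdeal' N q p
    rwa [hp, map_zero, sub_zero] at this
  -- the maximal ideals of the (Artinian) quotient form a finite set
  haveI hfin : Finite {I : Ideal (MvPolynomial (Fin N) ℂ ⧸ IZ) | I.IsMaximal} :=
    (IsArtinianRing.setOfPred_isMaximal_finite (MvPolynomial (Fin N) ℂ ⧸ IZ)).to_subtype
  -- each maximal ideal of the quotient comes from a point of affine space
  have hpt : ∀ I : {I : Ideal (MvPolynomial (Fin N) ℂ ⧸ IZ) | I.IsMaximal},
      ∃ a : Fin N → ℂ,
        (I : Ideal (MvPolynomial (Fin N) ℂ ⧸ IZ)).comap (Ideal.Quotient.mk IZ)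
          = MvPolynomial.vanishingIdeal ℂ {a} := by
    intro I
    haveI : (I : Ideal (MvPolynomial (Fin N) ℂ ⧸ IZ)).IsMaximal := I.2
    have hmax : ((I : Ideal (MvPolynomial (Fin N) ℂ ⧸ IZ)).comap
        (Ideal.Quotient.mk IZ)).IsMaximal :=
      Ideal.comap_isMaximal_of_surjective _ Ideal.Quotient.mk_surjective
    exact (MvPolynomial.isMaximal_iff_eq_vanishingIdeal_singleton).1 hmax
  choose pt hptspec using hpt
  -- each such point differs from q
  have hptne : ∀ I, pt I ≠ q := by
    intro I hIq
    apply hq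
    intro p hp
    have hmem : p ∈ (I : Ideal (MvPolynomial (Fin N) ℂ ⧸ IZ)).comap (Ideal.Quotient.mk IZ) := by
      simp only [Ideal.mem_comap]
      rw [show (Ideal.Quotient.mk IZ) p = 0 from Ideal.Quotient.eq_zero_iff_mem.2 hp]
      exact Submodule.zero_mem _
    rw [hptspec I, hIq] at hmem
    exact hvq p ((MvPolynomial.mem_vanishingIdeal_singleton_iff q p).1 hmem)
  -- linear functionals separating q from the points
  let φ : {I : Ideal (MvPolynomial (Fin N) ℂ ⧸ IZ) | I.IsMaximal} →
      ((Fin N → ℂ) →ₗ[ℂ] ℂ) := fun I =>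
    { toFun := fun v => ∑ j, v j * (pt I j - q j)
      map_add' := by intro x y; simp [add_mul, Finset.sum_add_distrib]
      map_smul' := by intro c x; simp [Finset.mul_sum, mul_assoc] }
  have hφne : ∀ I, ∃ v, φ I v ≠ 0 := by
    intro I
    obtain ⟨j, hj⟩ : ∃ j, pt I j - q j ≠ 0 := by
      by_contra hall
      push_neg at hall
      exact hptne I (funext fun j => by have := hall j; linear_combination this)
    refine ⟨Pi.single j 1, ?_⟩
    have : φ I (Pi.single j 1) = pt I j - q j := by
      simp only [φ, LinearMap.coe_mk, AddHom.coe_mk]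
      rw [Finset.sum_eq_single j]
      · simp
      · intro b _ hb; simp [Pi.single_apply, hb]
      · simp
    rw [this]; exact hj
  -- a vector on which all the functionals are nonzero
  obtain ⟨v, hv⟩ : ∃ v, ∀ I, φ I v ≠ 0 := by
    have hne : (⋃ I, ((LinearMap.ker (φ I) : Subspace ℂ (Fin N → ℂ)) : Set (Fin N → ℂ)))
        ≠ Set.univ := by
      intro hcov
      obtain ⟨I, hI⟩ := Subspace.exists_eq_top_of_iUnion_eq_univ hcov
      obtain ⟨w, hw⟩ := hφne I
      exact hw (LinearMap.ker_eq_top.1 hI ▸ rfl)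
    obtain ⟨v, hv⟩ := (Set.ne_univ_iff_exists_notMem _).1 hne
    refine ⟨v, fun I => ?_⟩
    intro h0
    exact hv (Set.mem_iUnion.2 ⟨I, LinearMap.mem_ker.2 h0⟩)
  -- the linear polynomial ℓ vanishing at q, nonvanishing on the support of Z
  set ℓ : MvPolynomial (Fin N) ℂ :=
    ∑ j, MvPolynomial.C (v j) * (MvPolynomial.X j - MvPolynomial.C (q j)) with hℓ
  have hℓq : MvPolynomial.eval q ℓ = 0 := by simp [hℓ]
  have hℓdeg : ℓ.totalDegree ≤ 1 := by
    refine MvPolynomial.totalDegree_finsetSum_le (fun j _ => ?_)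
    calc (MvPolynomial.C (v j) * (MvPolynomial.X j - MvPolynomial.C (q j))).totalDegree
        ≤ (MvPolynomial.C (v j)).totalDegree +
            (MvPolynomial.X j - MvPolynomial.C (q j)).totalDegree :=
          MvPolynomial.totalDegree_mul _ _
      _ ≤ 0 + 1 := by
          refine add_le_add (le_of_eq (MvPolynomial.totalDegree_C _)) ?_
          refine (MvPolynomial.totalDegree_sub _ _).trans ?_
          simp [MvPolynomial.totalDegree_X, MvPolynomial.totalDegree_C]
      _ = 1 := by norm_num
  have hℓpt : ∀ I, MvPolynomial.eval (pt I) ℓ ≠ 0 := by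
    intro I
    have : MvPolynomial.eval (pt I) ℓ = φ I v := by
      simp [hℓ, φ]
    rw [this]; exact hv I
  -- ℓ is a unit modulo IZ
  have hunit : IsUnit (Ideal.Quotient.mk IZ ℓ) := by
    by_contra hnu
    obtain ⟨M, hM, hmem⟩ := exists_max_ideal_of_mem_nonunits (mem_nonunits_iff.2 hnu)
    have : ℓ ∈ (M : Ideal (MvPolynomial (Fin N) ℂ ⧸ IZ)).comap (Ideal.Quotient.mk IZ) := hmem
    rw [hptspec ⟨M, hM⟩] at this
    exact hℓpt ⟨M, hM⟩ ((MvPolynomial.mem_vanishingIdeal_singleton_iff _ _).1 this)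
  obtain ⟨u, hu⟩ : ∃ u, ℓ * u - 1 ∈ IZ := by
    obtain ⟨w, hw⟩ := hunit.exists_right_inv
    obtain ⟨u, hu⟩ := Ideal.Quotient.mk_surjective w
    refine ⟨u, ?_⟩
    rw [← Ideal.Quotient.eq_zero_iff_mem]
    rw [map_sub, map_mul, hu, hw, map_one, sub_self]
  -- replace u by a low-degree representative s
  obtain ⟨s, hs1, hs2⟩ := hreg u
  -- the auxiliary polynomial h : in IZ, degree ≤ m, value 1 at q
  set h : MvPolynomial (Fin N) ℂ := 1 - s * ℓ with hh
  have hhIZ : h ∈ IZ := by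
    have : h = -(ℓ * u - 1) - (s - u) * ℓ := by rw [hh]; ring
    rw [this]
    exact IZ.sub_mem (IZ.neg_mem hu) (IZ.mul_mem_right _ hs2)
  have hhdeg : h.totalDegree ≤ m := by
    refine (MvPolynomial.totalDegree_sub _ _).trans ?_
    have h1 : (1 : MvPolynomial (Fin N) ℂ).totalDegree = 0 := MvPolynomial.totalDegree_one
    have h2 : (s * ℓ).totalDegree ≤ m := by
      calc (s * ℓ).totalDegree ≤ s.totalDegree + ℓ.totalDegree :=
            MvPolynomial.totalDegree_mul _ _
        _ ≤ s.totalDegree + 1 := by omega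
        _ ≤ m := hs1
    omega
  have hhq : MvPolynomial.eval q h = 1 := by
    simp [hh, hℓq]
  -- the final assembly
  intro g c
  obtain ⟨f₀, hf₀1, hf₀2⟩ := hreg g
  refine ⟨f₀ + MvPolynomial.C (c - MvPolynomial.eval q f₀) * h, ?_, ?_, ?_⟩
  · refine (MvPolynomial.totalDegree_add _ _).trans ?_
    have hch : (MvPolynomial.C (c - MvPolynomial.eval q f₀) * h).totalDegree ≤ m := by
      calc (MvPolynomial.C (c - MvPolynomial.eval q f₀) * h).totalDegree
          ≤ (MvPolynomial.C (c - MvPolynomial.eval q f₀)).totalDegree + h.totalDegree :=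
            MvPolynomial.totalDegree_mul _ _
        _ ≤ 0 + m := add_le_add (le_of_eq (MvPolynomial.totalDegree_C _)) hhdeg
        _ = m := by omega
    have : f₀.totalDegree ≤ m := by omega
    omega
  · have : f₀ + MvPolynomial.C (c - MvPolynomial.eval q f₀) * h - g =
        (f₀ - g) + MvPolynomial.C (c - MvPolynomial.eval q f₀) * h := by ring
    rw [this]
    exact IZ.add_mem hf₀2 (IZ.mul_mem_left _ hhIZ)
  · simp [hhq]
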